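/- Let h : ℝ^d → ℝ be differentiable and bounded below by h*. Let θ_0 ∈ ℝ^d and for each t = 0,…,T−1 let g_t : ℝ^d → ℝ be a differentiable, β-smooth function (gradient β-Lipschitz) satisfying g_t(θ_t) = h(θ_t), g_t(θ) ≥ h(θ) for all θ, and ∇g_t(θ_t) = ∇h(θ_t), where θ_{t+1} is obtained from θ_t by running m ≥ 1 steps of gradient descent on g_t with step-size 1/β starting from ω_0 = θ_t (i.e. ω_{k+1} = ω_k − (1/β)∇g_t(ω_k), θ_{t+1} = ω_m). Then for every t, h(θ_{t+1}) ≤ h(θ_t), and moreover min_{t ∈ {0,…,T−1}} ‖∇h(θ_t)‖² ≤ 2β(h(θ_0) − h*)/T. -/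

import Mathlib

open InnerProductSpace

variable {E : Type*} [NormedAddCommGroup E] [InnerProductSpace ℝ E] [CompleteSpace E]

lemma line_deriv (g : E → ℝ) (hg : Differentiable ℝ g) (u w : E) (s : ℝ) :
    HasDerivAt (fun s : ℝ => g (u + s • w)) (inner ℝ (gradient g (u + s • w)) w : ℝ) s := by
  have h1 : HasDerivAt (fun s : ℝ => u + s • w) w s := by
    simpa using ((hasDerivAt_id s).smul_const w).const_add u
  have h2 := (hg (u + s • w)).hasGradientAt.hasFDerivAt
  have := h2.comp_hasDerivAt s h1
  rw [InnerProductSpace.toDual_apply_apply] at this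
  exact this

lemma descent (g : E → ℝ) (hg : Differentiable ℝ g) (β : ℝ) (hβ : 0 < β)
    (hL : ∀ u v, ‖gradient g u - gradient g v‖ ≤ β * ‖u - v‖) (u v : E) :
    g v ≤ g u + inner ℝ (gradient g u) (v - u) + β / 2 * ‖v - u‖ ^ 2 := by
  set w := v - u with hw
  set ψ : ℝ → ℝ := fun s => g (u + s • w) - g u - s * inner ℝ (gradient g u) w
    - β / 2 * s ^ 2 * ‖w‖ ^ 2 with hψ
  have hd : ∀ s : ℝ, HasDerivAt ψ
      ((inner ℝ (gradient g (u + s • w)) w : ℝ) - inner ℝ (gradient g u) w - β * s * ‖w‖ ^ 2) s := by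
    intro s
    have h1 := line_deriv g hg u w s
    have h2 : HasDerivAt (fun s : ℝ => s * (inner ℝ (gradient g u) w : ℝ))
        (inner ℝ (gradient g u) w : ℝ) s := by simpa using (hasDerivAt_id s).mul_const _
    have h3 : HasDerivAt (fun s : ℝ => β / 2 * s ^ 2 * ‖w‖ ^ 2) (β * s * ‖w‖ ^ 2) s := by
      have : HasDerivAt (fun s : ℝ => s ^ 2) (2 * s) s := by
        simpa using hasDerivAt_pow 2 s
      have := ((this.const_mul (β / 2)).mul_const (‖w‖ ^ 2))
      exact this.congr_deriv (by ring)
    have := ((h1.sub_const (g u)).sub h2).sub h3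
    exact this
  have hnonpos : ∀ s ∈ Set.Icc (0:ℝ) 1,
      (inner ℝ (gradient g (u + s • w)) w : ℝ) - inner ℝ (gradient g u) w - β * s * ‖w‖ ^ 2 ≤ 0 := by
    intro s hs
    have key : (inner ℝ (gradient g (u + s • w)) w : ℝ) - inner ℝ (gradient g u) w
        = inner ℝ (gradient g (u + s • w) - gradient g u) w := by
      rw [inner_sub_left]
    rw [key]
    have h4 : (inner ℝ (gradient g (u + s • w) - gradient g u) w : ℝ)
        ≤ ‖gradient g (u + s • w) - gradient g u‖ * ‖w‖ := real_inner_le_norm _ _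
    have h5 : ‖gradient g (u + s • w) - gradient g u‖ ≤ β * (s * ‖w‖) := by
      have := hL (u + s • w) u
      simpa [norm_smul, abs_of_nonneg hs.1] using this
    nlinarith [norm_nonneg w, mul_nonneg hs.1 (norm_nonneg w)]
  have hanti : AntitoneOn ψ (Set.Icc 0 1) := by
    apply antitoneOn_of_deriv_nonpos (convex_Icc 0 1)
    · exact (fun s _ => (hd s).differentiableAt.continuousAt.continuousWithinAt)
    · intro s _; exact (hd s).differentiableAt.differentiableWithinAt
    · intro s hs
      rw [(hd s).deriv]
      exact hnonpos s (Set.mem_of_mem_of_subset hs interior_subset)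
  have := hanti (Set.left_mem_Icc.mpr zero_le_one) (Set.right_mem_Icc.mpr zero_le_one) zero_le_one
  simp only [hψ] at this
  have h0 : u + (0:ℝ) • w = u := by simp
  have h1 : u + (1:ℝ) • w = v := by simp [hw]
  rw [h0, h1] at this
  simp [-inner_gradient_left] at this
  linarith

lemma step (g : E → ℝ) (hg : Differentiable ℝ g) (β : ℝ) (hβ : 0 < β)
    (hL : ∀ u v, ‖gradient g u - gradient g v‖ ≤ β * ‖u - v‖) (u : E) :
    g (u - (1 / β) • gradient g u) ≤ g u - 1 / (2 * β) * ‖gradient g u‖ ^ 2 := by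
  have := descent g hg β hβ hL u (u - (1 / β) • gradient g u)
  have hv : u - (1 / β) • gradient g u - u = -((1 / β) • gradient g u) := by abel
  rw [hv] at this
  rw [inner_neg_right, real_inner_smul_right, real_inner_self_eq_norm_sq] at this
  rw [norm_neg, norm_smul] at this
  rw [Real.norm_eq_abs, abs_of_pos (show (0:ℝ) < 1/β by positivity), mul_pow] at this
  have hβ' : β ≠ 0 := hβ.ne'
  calc g (u - (1 / β) • gradient g u) ≤ g u + -(1 / β * ‖gradient g u‖ ^ 2)
        + β / 2 * ((1 / β) ^ 2 * ‖gradient g u‖ ^ 2) := this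
    _ = g u - 1 / (2 * β) * ‖gradient g u‖ ^ 2 := by field_simp; ring

theorem stmt0 {d : ℕ} (h : EuclideanSpace ℝ (Fin d) → ℝ) (hdiff : Differentiable ℝ h)
    (hstar : ℝ) (hbdd : ∀ θ', hstar ≤ h θ')
    (T : ℕ) (hT : 0 < T) (m : ℕ) (hm : 1 ≤ m) (β : ℝ) (hβ : 0 < β)
    (θ : ℕ → EuclideanSpace ℝ (Fin d)) (g : ℕ → EuclideanSpace ℝ (Fin d) → ℝ)
    (hgdiff : ∀ t < T, Differentiable ℝ (g t))
    (hsmooth : ∀ t < T, ∀ u v, ‖gradient (g t) u - gradient (g t) v‖ ≤ β * ‖u - v‖)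
    (htight : ∀ t < T, g t (θ t) = h (θ t))
    (hupper : ∀ t < T, ∀ θ', h θ' ≤ g t θ')
    (hgrad : ∀ t < T, gradient (g t) (θ t) = gradient h (θ t))
    (hupdate : ∀ t < T, ∃ ω : ℕ → EuclideanSpace ℝ (Fin d),
      ω 0 = θ t ∧ (∀ k, ω (k + 1) = ω k - (1 / β) • gradient (g t) (ω k)) ∧
        θ (t + 1) = ω m) :
    (∀ t < T, h (θ (t + 1)) ≤ h (θ t)) ∧
      (Finset.range T).inf' (Finset.nonempty_range_iff.mpr hT.ne')
        (fun t => ‖gradient h (θ t)‖ ^ 2) ≤ 2 * β * (h (θ 0) - hstar) / T := by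
  have key : ∀ t < T, h (θ (t + 1)) ≤ h (θ t) - 1 / (2 * β) * ‖gradient h (θ t)‖ ^ 2 := by
    intro t ht
    obtain ⟨ω, hω0, hωs, hωm⟩ := hupdate t ht
    have hstep : ∀ k, g t (ω (k + 1)) ≤ g t (ω k) - 1 / (2 * β) * ‖gradient (g t) (ω k)‖ ^ 2 := by
      intro k
      rw [hωs k]
      exact step (g t) (hgdiff t ht) β hβ (hsmooth t ht) (ω k)
    have hmono : ∀ k, 1 ≤ k → g t (ω k) ≤ g t (ω 1) := by
      intro k hk
      induction k, hk using Nat.le_induction with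
      | base => exact le_refl _
      | succ n hn ih =>
        calc g t (ω (n + 1)) ≤ g t (ω n) - 1 / (2 * β) * ‖gradient (g t) (ω n)‖ ^ 2 := hstep n
          _ ≤ g t (ω n) := by
              have : (0:ℝ) ≤ 1 / (2 * β) * ‖gradient (g t) (ω n)‖ ^ 2 := by positivity
              linarith
          _ ≤ g t (ω 1) := ih
    have h1 : g t (ω 1) ≤ g t (θ t) - 1 / (2 * β) * ‖gradient h (θ t)‖ ^ 2 := by
      have := hstep 0
      rw [hω0, hgrad t ht] at this
      exact this
    calc h (θ (t + 1)) ≤ g t (θ (t + 1)) := hupper t ht _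
      _ = g t (ω m) := by rw [hωm]
      _ ≤ g t (ω 1) := hmono m hm
      _ ≤ g t (θ t) - 1 / (2 * β) * ‖gradient h (θ t)‖ ^ 2 := h1
      _ = h (θ t) - 1 / (2 * β) * ‖gradient h (θ t)‖ ^ 2 := by rw [htight t ht]
  constructor
  · intro t ht
    have := key t ht
    have h0 : (0:ℝ) ≤ 1 / (2 * β) * ‖gradient h (θ t)‖ ^ 2 := by positivity
    linarith
  · have hsum : ∑ t ∈ Finset.range T, ‖gradient h (θ t)‖ ^ 2 ≤ 2 * β * (h (θ 0) - hstar) := by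
      have h1 : ∀ t ∈ Finset.range T, ‖gradient h (θ t)‖ ^ 2 ≤ 2 * β * (h (θ t) - h (θ (t + 1))) := by
        intro t ht
        have := key t (Finset.mem_range.mp ht)
        have h2 : 1 / (2 * β) * ‖gradient h (θ t)‖ ^ 2 ≤ h (θ t) - h (θ (t + 1)) := by linarith
        calc ‖gradient h (θ t)‖ ^ 2 = 2 * β * (1 / (2 * β) * ‖gradient h (θ t)‖ ^ 2) := by
              field_simp
          _ ≤ 2 * β * (h (θ t) - h (θ (t + 1))) :=
              mul_le_mul_of_nonneg_left h2 (by positivity)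
      calc ∑ t ∈ Finset.range T, ‖gradient h (θ t)‖ ^ 2
          ≤ ∑ t ∈ Finset.range T, 2 * β * (h (θ t) - h (θ (t + 1))) := Finset.sum_le_sum h1
        _ = 2 * β * (h (θ 0) - h (θ T)) := by
            rw [← Finset.mul_sum, Finset.sum_range_sub' (fun t => h (θ t))]
        _ ≤ 2 * β * (h (θ 0) - hstar) := by nlinarith [hbdd (θ T)]
    set I := (Finset.range T).inf' (Finset.nonempty_range_iff.mpr hT.ne')
        (fun t => ‖gradient h (θ t)‖ ^ 2) with hI
    have hTI : (T : ℝ) * I ≤ ∑ t ∈ Finset.range T, ‖gradient h (θ t)‖ ^ 2 := by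
      have := Finset.card_nsmul_le_sum (Finset.range T) (fun t => ‖gradient h (θ t)‖ ^ 2) I
        (fun i hi => Finset.inf'_le _ hi)
      simpa [nsmul_eq_mul] using this
    rw [le_div_iff₀ (by positivity : (0:ℝ) < T)]
    calc I * T = (T : ℝ) * I := by ring
      _ ≤ _ := hTI
      _ ≤ _ := hsum
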